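/- Let K : Ω → (0, ∞) be a tempered random variable over an invertible measure-preserving system (Ω, ℙ, σ), i.e. lim_{n→±∞} (1/n) log K(σ^n ω) = 0 for ℙ-a.e. ω. Then for each ε > 0 there exists a random variable K_ε : Ω → (0, ∞) such that K(ω) ≤ K_ε(ω) and K_ε(σ^n ω) ≤ K_ε(ω) e^{ε|n|} for ℙ-a.e. ω ∈ Ω and all n ∈ ℤ. -/

import Mathlib

open MeasureTheory Filter

/-- The `n`-th iterate (`n ∈ ℤ`) of an invertible transformation. -/
noncomputable def zIter {Ω : Type*} [MeasurableSpace Ω] (σ : Ω ≃ᵐ Ω) (n : ℤ) (ω : Ω) : Ω :=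
  if 0 ≤ n then σ^[n.toNat] ω else σ.symm^[(-n).toNat] ω

/-- `K : Ω → (0,∞)` is tempered: `(1/n) log K(σⁿ ω) → 0` as `n → ±∞`, a.s. -/
def TemperedZ {Ω : Type*} [MeasurableSpace Ω] (μ : Measure Ω) (σ : Ω ≃ᵐ Ω)
    (K : Ω → ℝ) : Prop :=
  ∀ᵐ ω ∂μ,
    Tendsto (fun n : ℤ => Real.log (K (zIter σ n ω)) / (n : ℝ)) atTop (nhds 0) ∧
    Tendsto (fun n : ℤ => Real.log (K (zIter σ n ω)) / (n : ℝ)) atBot (nhds 0)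

lemma zIter_eq {Ω : Type*} [MeasurableSpace Ω] (σ : Ω ≃ᵐ Ω) (n : ℤ) (ω : Ω) :
    zIter σ n ω = (σ.toEquiv ^ n) ω := by
  unfold zIter
  split
  · next h =>
    rw [← Int.toNat_of_nonneg h, zpow_natCast, ← Equiv.Perm.iterate_eq_pow]
    rfl
  · next h =>
    have : n = -((-n).toNat : ℤ) := by omega
    conv_rhs => rw [this]
    rw [zpow_neg, zpow_natCast, ← inv_pow, ← Equiv.Perm.iterate_eq_pow]
    simp [Equiv.Perm.inv_def]

lemma zIter_add {Ω : Type*} [MeasurableSpace Ω] (σ : Ω ≃ᵐ Ω) (m n : ℤ) (ω : Ω) :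
    zIter σ (m + n) ω = zIter σ m (zIter σ n ω) := by
  simp only [zIter_eq, zpow_add, Equiv.Perm.mul_apply]

lemma zIter_zero {Ω : Type*} [MeasurableSpace Ω] (σ : Ω ≃ᵐ Ω) (ω : Ω) :
    zIter σ 0 ω = ω := by simp [zIter]

lemma mul_exp_neg_le_one {x y : ℝ} (hx : 0 < x) (h : Real.log x ≤ y) :
    x * Real.exp (-y) ≤ 1 := by
  rw [Real.exp_neg]
  calc x * (Real.exp y)⁻¹ ≤ Real.exp y * (Real.exp y)⁻¹ := by
        gcongr
        exact (Real.log_le_iff_le_exp hx).1 h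
    _ = 1 := mul_inv_cancel₀ (Real.exp_ne_zero y)

/-- For a tempered random variable `K` over an invertible
measure-preserving system and any `ε > 0`, there is `K_ε ≥ K` with
`K_ε(σⁿ ω) ≤ K_ε(ω) e^{ε |n|}` for all `n ∈ ℤ`, almost surely. -/
theorem stmt_3 {Ω : Type*} [MeasurableSpace Ω] (μ : Measure Ω) [IsProbabilityMeasure μ]
    (σ : Ω ≃ᵐ Ω) (hσ : MeasurePreserving σ μ μ)
    (K : Ω → ℝ) (hKmeas : Measurable K) (hKpos : ∀ ω, 0 < K ω)
    (hK : TemperedZ μ σ K) (ε : ℝ) (hε : 0 < ε) :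
    ∃ Kε : Ω → ℝ, (∀ ω, 0 < Kε ω) ∧
      ∀ᵐ ω ∂μ, K ω ≤ Kε ω ∧
        ∀ n : ℤ, Kε (zIter σ n ω) ≤ Kε ω * Real.exp (ε * |(n : ℝ)|) := by
  classical
  -- the orbit-weighted family
  set g : Ω → ℤ → ℝ := fun ω n => K (zIter σ n ω) * Real.exp (-(ε * |(n : ℝ)|)) with hg
  set S : Ω → ℝ := fun ω => ⨆ n : ℤ, g ω n with hS
  refine ⟨fun ω => max (K ω) (S ω), fun ω => lt_max_of_lt_left (hKpos ω), ?_⟩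
  -- key deterministic bound on the good set
  have gpos : ∀ ω n, 0 < g ω n := fun ω n =>
    mul_pos (hKpos _) (Real.exp_pos _)
  have key : ∀ ω : Ω, BddAbove (Set.range (g ω)) → ∀ m n : ℤ,
      g (zIter σ m ω) n ≤ S ω * Real.exp (ε * |(m : ℝ)|) := by
    intro ω hG m n
    have h1 : zIter σ n (zIter σ m ω) = zIter σ (n + m) ω := (zIter_add σ n m ω).symm
    have habs : |((n + m : ℤ) : ℝ)| ≤ |(n : ℝ)| + |(m : ℝ)| := by
      push_cast; exact abs_add_le _ _
    have hexp : Real.exp (-(ε * |(n : ℝ)|)) ≤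
        Real.exp (-(ε * |((n + m : ℤ) : ℝ)|)) * Real.exp (ε * |(m : ℝ)|) := by
      rw [← Real.exp_add]
      apply Real.exp_le_exp.2
      nlinarith [abs_nonneg ((n : ℝ)), abs_nonneg ((m : ℝ))]
    calc g (zIter σ m ω) n
        = K (zIter σ (n + m) ω) * Real.exp (-(ε * |(n : ℝ)|)) := by rw [hg]; simp only; rw [h1]
      _ ≤ K (zIter σ (n + m) ω) *
            (Real.exp (-(ε * |((n + m : ℤ) : ℝ)|)) * Real.exp (ε * |(m : ℝ)|)) := by
          have := hKpos (zIter σ (n + m) ω); nlinarith [Real.exp_pos (ε * |(m : ℝ)|)]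
      _ = g ω (n + m) * Real.exp (ε * |(m : ℝ)|) := by rw [hg]; ring
      _ ≤ S ω * Real.exp (ε * |(m : ℝ)|) := by
          exact mul_le_mul_of_nonneg_right (le_ciSup hG (n + m)) (Real.exp_pos _).le
  filter_upwards [hK] with ω hω
  obtain ⟨h1, h2⟩ := hω
  -- a.e. boundedness of the family
  have e1 : ∀ᶠ n : ℤ in atTop,
      Real.log (K (zIter σ n ω)) / (n : ℝ) < ε := h1.eventually (gt_mem_nhds hε)
  have e2 : ∀ᶠ n : ℤ in atBot,
      -ε < Real.log (K (zIter σ n ω)) / (n : ℝ) := h2.eventually (lt_mem_nhds (neg_lt_zero.2 hε))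
  obtain ⟨a, ha⟩ := eventually_atTop.mp (e1.and (eventually_ge_atTop 1))
  obtain ⟨b, hb⟩ := eventually_atBot.mp (e2.and (eventually_le_atBot (-1)))
  have tail : ∀ n : ℤ, n ∉ Set.Icc b a → g ω n ≤ 1 := by
    intro n hn
    rw [Set.mem_Icc, not_and_or] at hn
    rcases hn with hn | hn
    · push_neg at hn
      obtain ⟨hlt, hle⟩ := hb n (by omega)
      have hnr : (n : ℝ) ≤ -1 := by exact_mod_cast (by omega : n ≤ -1)
      have hneg : (n : ℝ) < 0 := by linarith
      have habs : |(n : ℝ)| = -(n : ℝ) := abs_of_neg hneg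
      have hlog : Real.log (K (zIter σ n ω)) ≤ ε * |(n : ℝ)| := by
        rw [lt_div_iff_of_neg hneg] at hlt
        rw [habs]; nlinarith
      exact mul_exp_neg_le_one (hKpos _) hlog
    · push_neg at hn
      obtain ⟨hlt, hle⟩ := ha n (by omega)
      have hnr : (1 : ℝ) ≤ (n : ℝ) := by exact_mod_cast hle
      have hpos : (0 : ℝ) < (n : ℝ) := by linarith
      have habs : |(n : ℝ)| = (n : ℝ) := abs_of_pos hpos
      have hlog : Real.log (K (zIter σ n ω)) ≤ ε * |(n : ℝ)| := by
        rw [div_lt_iff₀ hpos] at hlt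
        rw [habs]; nlinarith
      exact mul_exp_neg_le_one (hKpos _) hlog
  obtain ⟨c, hc⟩ := ((Set.finite_Icc b a).image (g ω)).bddAbove
  have hG : BddAbove (Set.range (g ω)) := by
    refine ⟨max 1 c, ?_⟩
    rintro x ⟨n, rfl⟩
    by_cases hn : n ∈ Set.Icc b a
    · exact le_max_of_le_right (hc (Set.mem_image_of_mem _ hn))
    · exact le_max_of_le_left (tail n hn)
  have hK0 : K ω ≤ S ω := by
    have := le_ciSup hG 0
    simpa [hg, hS, zIter_zero] using this
  refine ⟨le_max_of_le_right hK0, fun m => ?_⟩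
  have hexp0 : (0:ℝ) < Real.exp (ε * |(m : ℝ)|) := Real.exp_pos _
  have hSle : S ω ≤ max (K ω) (S ω) := le_max_right _ _
  apply max_le
  · -- K (zIter σ m ω) = g (zIter σ m ω) 0
    have h0 : K (zIter σ m ω) = g (zIter σ m ω) 0 := by simp [hg, zIter_zero]
    calc K (zIter σ m ω) = g (zIter σ m ω) 0 := h0
      _ ≤ S ω * Real.exp (ε * |(m : ℝ)|) := key ω hG m 0
      _ ≤ max (K ω) (S ω) * Real.exp (ε * |(m : ℝ)|) := by gcongr
  · calc S (zIter σ m ω) ≤ S ω * Real.exp (ε * |(m : ℝ)|) := ciSup_le (key ω hG m)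
      _ ≤ max (K ω) (S ω) * Real.exp (ε * |(m : ℝ)|) := by gcongr
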